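/- arXiv:2604.20252 — 2 statements merged into one kernel-verified Lean document; each statement's English description precedes it below -/
import Mathlib

section
/- Let n ≥ 3 be an odd integer, let h = (n+1)/2, and let i ≥ 1 be an integer. For an integer x, let ⟨x⟩ denote the representative of x modulo n lying in {0, …, n−1}. Define M : {1,…,n} × {1,…,n} → ℤ by M(r,c) = t₁ + t₂ + t₃ + t₄, where t₁ = n + 4ni + 1 + 2(c−1) if r ≡ c + 2i (mod n) and t₁ = 0 otherwise; t₂ = −(3n + 4ni + 1 + 2(c−1)) if r ≡ c + 2i + 1 (mod n) and t₂ = 0 otherwise; t₃ = −(n + 4ni + 2 + 2⟨c−h−1⟩) if r ≡ c + 2i − h (mod n) and t₃ = 0 otherwise; t₄ = 3n + 4ni + 2 + 2⟨c−h−1⟩ if r ≡ c + 2i + 1 − h (mod n) and t₄ = 0 otherwise. Then for every r ∈ {1,…,n} the sum ∑_{c=1}^{n} M(r,c) = 0, and for every c ∈ {1,…,n} the sum ∑_{r=1}^{n} M(r,c) = 0. -/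
private lemma pick {n : ℕ} {p : ℕ → Prop} [DecidablePred p] {f : ℕ → ℤ} {c₀ : ℕ}
    (h₀ : c₀ ∈ Finset.Icc 1 n) (hp : p c₀)
    (hu : ∀ c ∈ Finset.Icc 1 n, p c → c = c₀) :
    ∑ c ∈ Finset.Icc 1 n, (if p c then f c else 0) = f c₀ := by
  rw [Finset.sum_eq_single_of_mem c₀ h₀]
  · simp [hp]
  · intro c hc hne
    rw [if_neg fun h => hne (hu c hc h)]

private lemma emod_shift (x y n : ℤ) : (x % n + y) % n = (x + y) % n := by
  rw [Int.add_emod, Int.emod_emod_of_dvd _ dvd_rfl, ← Int.add_emod]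

private lemma emod_shift' (x y n : ℤ) : (x % n - y) % n = (x - y) % n := by
  rw [sub_eq_add_neg, sub_eq_add_neg, emod_shift]

private lemma rep (n : ℕ) (hn : 0 < n) (b : ℤ) :
    (((b - 1) % n).toNat + 1) ∈ Finset.Icc 1 n ∧
    ((((b - 1) % n).toNat + 1 : ℕ) : ℤ) % n = b % n ∧
    ∀ c ∈ Finset.Icc 1 n, (c : ℤ) % n = b % n → c = ((b - 1) % n).toNat + 1 := by
  have hn' : (0:ℤ) < n := by exact_mod_cast hn
  have h0 : 0 ≤ (b - 1) % n := Int.emod_nonneg _ (by omega)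
  have h1 : (b - 1) % n < n := Int.emod_lt_of_pos _ hn'
  have hcast : ((((b - 1) % n).toNat : ℤ)) = (b - 1) % n := Int.toNat_of_nonneg h0
  have hc₀ : ((((b - 1) % n).toNat + 1 : ℕ) : ℤ) % n = b % n := by
    push_cast [hcast]; rw [emod_shift]; ring_nf
  refine ⟨by simp [Finset.mem_Icc]; omega, hc₀, ?_⟩
  intro c hc hcb
  simp only [Finset.mem_Icc] at hc
  have hmod : Int.ModEq n (c : ℤ) ((((b - 1) % n).toNat + 1 : ℕ) : ℤ) :=
    hcb.trans hc₀.symm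
  have hdvd : (n:ℤ) ∣ ((((b - 1) % n).toNat + 1 : ℕ) : ℤ) - c := hmod.dvd
  have := Int.eq_zero_of_abs_lt_dvd hdvd (by push_cast [hcast]; rw [abs_lt]; omega)
  omega

private lemma key (n : ℕ) (hn : 0 < n) (R a : ℤ) (e f : ℕ → ℤ)
    (he : ∀ c : ℕ, e c = c + a) :
    ∑ c ∈ Finset.Icc 1 n, (if R % n = e c % n then f c else 0)
      = f (((R - a - 1) % n).toNat + 1) := by
  obtain ⟨hmem, hc₀, huniq⟩ := rep n hn (R - a)
  have hiff : ∀ c : ℕ, (R % n = e c % n) ↔ ((c : ℤ) % n = (R - a) % n) := by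
    intro c
    rw [he]
    constructor
    · intro hmm
      have h2 : Int.ModEq (n:ℤ) (R - a) ((c:ℤ) + a - a) := Int.ModEq.sub_right a hmm
      exact (by simpa using h2.symm : Int.ModEq _ _ _)
    · intro hmm
      have h2 : Int.ModEq (n:ℤ) ((c:ℤ) + a) (R - a + a) := Int.ModEq.add_right a hmm
      have h3 : Int.ModEq (n:ℤ) ((c:ℤ) + a) R := by simpa using h2
      exact h3.symm
  calc ∑ c ∈ Finset.Icc 1 n, (if R % n = e c % n then f c else 0)
      = ∑ c ∈ Finset.Icc 1 n, (if (c : ℤ) % n = (R - a) % n then f c else 0) :=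
        Finset.sum_congr rfl fun c _ => if_congr (hiff c) rfl rfl
    _ = f (((R - a - 1) % n).toNat + 1) := pick hmem hc₀ huniq

private lemma key' (n : ℕ) (hn : 0 < n) (b : ℤ) (f : ℕ → ℤ) :
    ∑ r ∈ Finset.Icc 1 n, (if (r:ℤ) % n = b % n then f r else 0)
      = f (((b - 1) % n).toNat + 1) := by
  obtain ⟨hmem, hc₀, huniq⟩ := rep n hn b
  exact pick hmem hc₀ huniq



/-- The contribution of the `i`-th quadruple of added diagonals
`D_{1+2i}, D_{2+2i}, D_{h+2i}, D_{h+1+2i}` (case `n ≡ 3 (mod 4)`, `h = (n+1)/2`) to the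
cell `(r, c)` (with `r, c ∈ {1,…,n}`).  Here `x % n` (with `n > 0`) is the representative of
`x` modulo `n` lying in `{0,…,n−1}`, and the conditions `r ≡ … (mod n)` are written as
equality of such representatives. -/
def M3 (n h i : ℕ) (r c : ℕ) : ℤ :=
  let N : ℤ := n
  let H : ℤ := h
  let I : ℤ := i
  let R : ℤ := r
  let C : ℤ := c
  (if R % N = (C + 2 * I) % N then N + 4 * N * I + 1 + 2 * (C - 1) else 0) +
  (if R % N = (C + 2 * I + 1) % N then -(3 * N + 4 * N * I + 1 + 2 * (C - 1)) else 0) +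
  (if R % N = (C + 2 * I - H) % N then -(N + 4 * N * I + 2 + 2 * ((C - H - 1) % N)) else 0) +
  (if R % N = (C + 2 * I + 1 - H) % N then 3 * N + 4 * N * I + 2 + 2 * ((C - H - 1) % N) else 0)

/-- For odd `n ≥ 3`, `h = (n+1)/2` and `i ≥ 1`, every row sum and every column sum of the
contribution matrix `M3` of the `i`-th quadruple of added diagonals is zero over `ℤ`. -/
theorem M3_row_col_sums_eq_zero (n h i : ℕ) (hn : 3 ≤ n) (hodd : Odd n)
    (hh : 2 * h = n + 1) (hi : 1 ≤ i) :
    (∀ r ∈ Finset.Icc 1 n, ∑ c ∈ Finset.Icc 1 n, M3 n h i r c = 0) ∧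
    (∀ c ∈ Finset.Icc 1 n, ∑ r ∈ Finset.Icc 1 n, M3 n h i r c = 0) := by
  have hn0 : 0 < n := by omega
  have hnz : ((n:ℤ)) ≠ 0 := by exact_mod_cast hn0.ne'
  constructor
  · intro r hr
    simp only [M3, Finset.sum_add_distrib]
    rw [key n hn0 (r:ℤ) (2*(i:ℤ)) (fun c => (c:ℤ) + 2*(i:ℤ))
          (fun c => (n:ℤ) + 4*(n:ℤ)*(i:ℤ) + 1 + 2*((c:ℤ) - 1)) (fun c => rfl),
        key n hn0 (r:ℤ) (2*(i:ℤ)+1) (fun c => (c:ℤ) + 2*(i:ℤ) + 1)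
          (fun c => -(3*(n:ℤ) + 4*(n:ℤ)*(i:ℤ) + 1 + 2*((c:ℤ) - 1))) (fun c => by ring),
        key n hn0 (r:ℤ) (2*(i:ℤ)-(h:ℤ)) (fun c => (c:ℤ) + 2*(i:ℤ) - (h:ℤ))
          (fun c => -((n:ℤ) + 4*(n:ℤ)*(i:ℤ) + 2 + 2*(((c:ℤ) - (h:ℤ) - 1) % (n:ℤ)))) (fun c => by ring),
        key n hn0 (r:ℤ) (2*(i:ℤ)+1-(h:ℤ)) (fun c => (c:ℤ) + 2*(i:ℤ) + 1 - (h:ℤ))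
          (fun c => 3*(n:ℤ) + 4*(n:ℤ)*(i:ℤ) + 2 + 2*(((c:ℤ) - (h:ℤ) - 1) % (n:ℤ))) (fun c => by ring)]
    have e1 : ((((r:ℤ) - 2*(i:ℤ) - 1) % n).toNat : ℤ) = ((r:ℤ) - 2*(i:ℤ) - 1) % n :=
      Int.toNat_of_nonneg (Int.emod_nonneg _ hnz)
    have e2 : ((((r:ℤ) - (2*(i:ℤ)+1) - 1) % n).toNat : ℤ) = ((r:ℤ) - (2*(i:ℤ)+1) - 1) % n :=
      Int.toNat_of_nonneg (Int.emod_nonneg _ hnz)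
    have e3 : ((((r:ℤ) - (2*(i:ℤ)-(h:ℤ)) - 1) % n).toNat : ℤ) = ((r:ℤ) - (2*(i:ℤ)-(h:ℤ)) - 1) % n :=
      Int.toNat_of_nonneg (Int.emod_nonneg _ hnz)
    have e4 : ((((r:ℤ) - (2*(i:ℤ)+1-(h:ℤ)) - 1) % n).toNat : ℤ) = ((r:ℤ) - (2*(i:ℤ)+1-(h:ℤ)) - 1) % n :=
      Int.toNat_of_nonneg (Int.emod_nonneg _ hnz)
    have m3 : (((r:ℤ) - (2*(i:ℤ)-(h:ℤ)) - 1) % n + 1 - (h:ℤ) - 1) % n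
        = ((r:ℤ) - 2*(i:ℤ) - 1) % n := by
      rw [show ((r:ℤ) - (2*(i:ℤ)-(h:ℤ)) - 1) % n + 1 - (h:ℤ) - 1
            = ((r:ℤ) - (2*(i:ℤ)-(h:ℤ)) - 1) % n - (h:ℤ) by ring, emod_shift',
          show (r:ℤ) - (2*(i:ℤ)-(h:ℤ)) - 1 - (h:ℤ) = (r:ℤ) - 2*(i:ℤ) - 1 by ring]
    have m4 : (((r:ℤ) - (2*(i:ℤ)+1-(h:ℤ)) - 1) % n + 1 - (h:ℤ) - 1) % n
        = ((r:ℤ) - (2*(i:ℤ)+1) - 1) % n := by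
      rw [show ((r:ℤ) - (2*(i:ℤ)+1-(h:ℤ)) - 1) % n + 1 - (h:ℤ) - 1
            = ((r:ℤ) - (2*(i:ℤ)+1-(h:ℤ)) - 1) % n - (h:ℤ) by ring, emod_shift',
          show (r:ℤ) - (2*(i:ℤ)+1-(h:ℤ)) - 1 - (h:ℤ) = (r:ℤ) - (2*(i:ℤ)+1) - 1 by ring]
    push_cast
    rw [e1, e2, e3, e4, m3, m4]
    ring
  · intro c hc
    simp only [M3, Finset.sum_add_distrib]
    rw [key' n hn0 (((c:ℤ) + 2*(i:ℤ)))
          (fun _ => (n:ℤ) + 4*(n:ℤ)*(i:ℤ) + 1 + 2*((c:ℤ) - 1)),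
        key' n hn0 (((c:ℤ) + 2*(i:ℤ) + 1))
          (fun _ => -(3*(n:ℤ) + 4*(n:ℤ)*(i:ℤ) + 1 + 2*((c:ℤ) - 1))),
        key' n hn0 (((c:ℤ) + 2*(i:ℤ) - (h:ℤ)))
          (fun _ => -((n:ℤ) + 4*(n:ℤ)*(i:ℤ) + 2 + 2*(((c:ℤ) - (h:ℤ) - 1) % (n:ℤ)))),
        key' n hn0 (((c:ℤ) + 2*(i:ℤ) + 1 - (h:ℤ)))
          (fun _ => 3*(n:ℤ) + 4*(n:ℤ)*(i:ℤ) + 2 + 2*(((c:ℤ) - (h:ℤ) - 1) % (n:ℤ)))]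
    ring
end

section
/- Let n ≥ 4 be an even integer, let h = n/2, and let i ≥ 1 be an integer. For an integer x, let ⟨x⟩ denote the representative of x modulo n lying in {0, …, n−1}. Define M : {1,…,n} × {1,…,n} → ℤ by M(r,c) = t₁ + t₂ + t₃ + t₄, where t₁ = −(n + 4ni + 1 + 4(c−1)) if r ≡ c + 1 + 2i (mod n) and t₁ = 0 otherwise; t₂ = n + 4ni + 3 + 4(c−1) if r ≡ c + 2 + 2i (mod n) and t₂ = 0 otherwise; t₃ = n + 4ni + 2 + 4⟨c−h−3⟩ if r ≡ c + 2i − h − 1 (mod n) and t₃ = 0 otherwise; t₄ = −(n + 4ni + 4 + 4⟨c−h−3⟩) if r ≡ c + 2i − h (mod n) and t₄ = 0 otherwise. Then for every r ∈ {1,…,n} the sum ∑_{c=1}^{n} M(r,c) = 0, and for every c ∈ {1,…,n} the sum ∑_{r=1}^{n} M(r,c) = 0. -/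
lemma cond_shift (n a b s : ℤ) : (b % n = (a + s) % n) ↔ (a % n = (b - s) % n) := by
  constructor <;> intro h
  · have h2 : Int.ModEq n (a + s) b := h.symm
    have := h2.sub_right s
    simpa [Int.ModEq] using this
  · have h2 : Int.ModEq n a (b - s) := h
    have := h2.add_right s
    have h3 : Int.ModEq n (a + s) b := by simpa using this
    exact h3.symm

/-- The unique representative in `{1,…,n}` of `b` mod `n`. -/
def rep_s9 (n : ℕ) (b : ℤ) : ℕ := ((b - 1) % n).toNat + 1

lemma rep_cast (n : ℕ) (hn : 0 < n) (b : ℤ) : ((rep_s9 n b : ℕ) : ℤ) = (b - 1) % n + 1 := by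
  have hn' : (0:ℤ) < n := by exact_mod_cast hn
  have h1 : (0:ℤ) ≤ (b-1) % n := Int.emod_nonneg _ (by omega)
  simp only [rep_s9]; push_cast; omega

lemma sum_ite_emod (n : ℕ) (hn : 0 < n) (b : ℤ) (f : ℕ → ℤ) :
    ∑ c ∈ Finset.Icc 1 n, (if (c : ℤ) % n = b % n then f c else 0)
      = f (rep_s9 n b) := by
  have hn' : (0:ℤ) < n := by exact_mod_cast hn
  have h1 : (0:ℤ) ≤ (b-1) % n := Int.emod_nonneg _ (by omega)
  have h2 : (b-1) % n < n := Int.emod_lt_of_pos _ hn'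
  have hc0z : ((rep_s9 n b : ℕ) : ℤ) = (b-1) % n + 1 := rep_cast n hn b
  have hmem : rep_s9 n b ∈ Finset.Icc 1 n := by
    simp only [Finset.mem_Icc]
    refine ⟨by simp [rep_s9], ?_⟩
    have : ((rep_s9 n b : ℕ) : ℤ) ≤ n := by omega
    exact_mod_cast this
  rw [Finset.sum_eq_single_of_mem _ hmem]
  · rw [if_pos]
    rw [hc0z, Int.emod_add_emod]
    congr 1; ring
  · intro c hc hne
    rw [if_neg]
    intro h
    apply hne
    have hcb : ((rep_s9 n b : ℕ) : ℤ) % n = b % n := by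
      rw [hc0z, Int.emod_add_emod]; congr 1; ring
    have hdvd : (n:ℤ) ∣ ((rep_s9 n b : ℕ) : ℤ) - c := Int.ModEq.dvd (h.trans hcb.symm)
    simp only [Finset.mem_Icc] at hc hmem
    have hfacts : (1:ℤ) ≤ (c:ℤ) ∧ (c:ℤ) ≤ n ∧ (1:ℤ) ≤ ((rep_s9 n b : ℕ):ℤ) ∧ ((rep_s9 n b :ℕ):ℤ) ≤ n :=
      ⟨by exact_mod_cast hc.1, by exact_mod_cast hc.2, by exact_mod_cast hmem.1,
        by exact_mod_cast hmem.2⟩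
    have := Int.eq_zero_of_abs_lt_dvd hdvd (by rw [abs_lt]; omega)
    omega

/-- The contribution of the `i`-th quadruple of added diagonals
`D_{2+2i}, D_{3+2i}, D_{h+1+2i}, D_{h+2+2i}` (case `n ≡ 0 (mod 4)`, `h = n/2`) to the
cell `(r, c)` (with `r, c ∈ {1,…,n}`).  Here `x % n` (with `n > 0`) is the representative of
`x` modulo `n` lying in `{0,…,n−1}`, and the conditions `r ≡ … (mod n)` are written as
equality of such representatives. -/
def M0 (n h i : ℕ) (r c : ℕ) : ℤ :=
  let N : ℤ := n
  let H : ℤ := h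
  let I : ℤ := i
  let R : ℤ := r
  let C : ℤ := c
  (if R % N = (C + 1 + 2 * I) % N then -(N + 4 * N * I + 1 + 4 * (C - 1)) else 0) +
  (if R % N = (C + 2 + 2 * I) % N then N + 4 * N * I + 3 + 4 * (C - 1) else 0) +
  (if R % N = (C + 2 * I - H - 1) % N then N + 4 * N * I + 2 + 4 * ((C - H - 3) % N) else 0) +
  (if R % N = (C + 2 * I - H) % N then -(N + 4 * N * I + 4 + 4 * ((C - H - 3) % N)) else 0)

/-- For even `n ≥ 4`, `h = n/2` and `i ≥ 1`, every row sum and every column sum of the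
contribution matrix `M0` of the `i`-th quadruple of added diagonals is zero over `ℤ`. -/
theorem M0_row_col_sums_eq_zero (n h i : ℕ) (hn : 4 ≤ n) (heven : Even n)
    (hh : 2 * h = n) (hi : 1 ≤ i) :
    (∀ r ∈ Finset.Icc 1 n, ∑ c ∈ Finset.Icc 1 n, M0 n h i r c = 0) ∧
    (∀ c ∈ Finset.Icc 1 n, ∑ r ∈ Finset.Icc 1 n, M0 n h i r c = 0) := by
  simp only [M0]
  have hn0 : 0 < n := by omega
  constructor
  · intro r hr
    rw [Finset.sum_add_distrib, Finset.sum_add_distrib, Finset.sum_add_distrib]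
    have e1 : ∀ c : ℕ, ((r:ℤ) % (n:ℤ) = ((c:ℤ) + 1 + 2 * (i:ℤ)) % n) ↔
        ((c:ℤ) % n = ((r:ℤ) - (1 + 2 * (i:ℤ))) % n) := fun c => by
      rw [show ((c:ℤ) + 1 + 2 * (i:ℤ)) = (c:ℤ) + (1 + 2 * (i:ℤ)) by ring, cond_shift]
    have e2 : ∀ c : ℕ, ((r:ℤ) % (n:ℤ) = ((c:ℤ) + 2 + 2 * (i:ℤ)) % n) ↔
        ((c:ℤ) % n = ((r:ℤ) - (2 + 2 * (i:ℤ))) % n) := fun c => by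
      rw [show ((c:ℤ) + 2 + 2 * (i:ℤ)) = (c:ℤ) + (2 + 2 * (i:ℤ)) by ring, cond_shift]
    have e3 : ∀ c : ℕ, ((r:ℤ) % (n:ℤ) = ((c:ℤ) + 2 * (i:ℤ) - (h:ℤ) - 1) % n) ↔
        ((c:ℤ) % n = ((r:ℤ) - (2 * (i:ℤ) - (h:ℤ) - 1)) % n) := fun c => by
      rw [show ((c:ℤ) + 2 * (i:ℤ) - (h:ℤ) - 1) = (c:ℤ) + (2 * (i:ℤ) - (h:ℤ) - 1) by ring, cond_shift]
    have e4 : ∀ c : ℕ, ((r:ℤ) % (n:ℤ) = ((c:ℤ) + 2 * (i:ℤ) - (h:ℤ)) % n) ↔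
        ((c:ℤ) % n = ((r:ℤ) - (2 * (i:ℤ) - (h:ℤ))) % n) := fun c => by
      rw [show ((c:ℤ) + 2 * (i:ℤ) - (h:ℤ)) = (c:ℤ) + (2 * (i:ℤ) - (h:ℤ)) by ring, cond_shift]
    simp only [e1, e2, e3, e4]
    rw [sum_ite_emod n hn0, sum_ite_emod n hn0, sum_ite_emod n hn0, sum_ite_emod n hn0]
    rw [rep_cast n hn0, rep_cast n hn0, rep_cast n hn0, rep_cast n hn0]
    have k3 : (((r:ℤ) - (2 * (i:ℤ) - (h:ℤ) - 1) - 1) % n + 1 - (h:ℤ) - 3) % n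
        = ((r:ℤ) - (1 + 2 * (i:ℤ)) - 1) % n := by
      rw [show ((r:ℤ) - (2 * (i:ℤ) - (h:ℤ) - 1) - 1) % n + 1 - (h:ℤ) - 3
          = ((r:ℤ) - (2 * (i:ℤ) - (h:ℤ) - 1) - 1) % n + (1 - (h:ℤ) - 3) by ring,
        Int.emod_add_emod]
      congr 1; ring
    have k4 : (((r:ℤ) - (2 * (i:ℤ) - (h:ℤ)) - 1) % n + 1 - (h:ℤ) - 3) % n
        = ((r:ℤ) - (2 + 2 * (i:ℤ)) - 1) % n := by
      rw [show ((r:ℤ) - (2 * (i:ℤ) - (h:ℤ)) - 1) % n + 1 - (h:ℤ) - 3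
          = ((r:ℤ) - (2 * (i:ℤ) - (h:ℤ)) - 1) % n + (1 - (h:ℤ) - 3) by ring,
        Int.emod_add_emod]
      congr 1; ring
    rw [k3, k4]
    ring
  · intro c hc
    rw [Finset.sum_add_distrib, Finset.sum_add_distrib, Finset.sum_add_distrib]
    rw [sum_ite_emod n hn0, sum_ite_emod n hn0, sum_ite_emod n hn0, sum_ite_emod n hn0]
    ring
end
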